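/- Let φ ∈ C^2 in a neighborhood of x ∈ ℝ^N. Then for every unit vector v, (1/2)φ(x + εv) + (1/2)φ(x − εv) − φ(x) = (ε^2/2)⟨D^2φ(x) v, v⟩ + o(ε^2) as ε → 0, uniformly over unit vectors v. Consequently, (2/ε^2)[ inf_{dim S = j} sup_{v∈S,|v|=1} ( (1/2)φ(x+εv) + (1/2)φ(x−εv) ) − φ(x) ] → λ_j(D^2 φ(x)) as ε → 0. -/

import Mathlib

open Matrix Filter

set_option maxHeartbeats 1600000

/-- The Hessian matrix of `f : ℝ^N → ℝ` at `x`. -/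
noncomputable def hess (N : ℕ) (f : (Fin N → ℝ) → ℝ) (x : Fin N → ℝ) :
    Matrix (Fin N) (Fin N) ℝ :=
  fun i j => iteratedFDeriv ℝ 2 f x ![Pi.single i 1, Pi.single j 1]

/-- The `j`-th smallest eigenvalue of a symmetric matrix via the inf-sup formula. -/
noncomputable def lamInfSup (N j : ℕ) (M : Matrix (Fin N) (Fin N) ℝ) : ℝ :=
  ⨅ S : {S : Submodule ℝ (Fin N → ℝ) // Module.finrank ℝ S = j},
    ⨆ v : {v : Fin N → ℝ // v ∈ S.1 ∧ v ⬝ᵥ v = 1}, (M.mulVec v.1) ⬝ᵥ v.1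

lemma unit_abs_le (N : ℕ) (v : Fin N → ℝ) (h : v ⬝ᵥ v = 1) (i : Fin N) : |v i| ≤ 1 := by
  have h2 : v i * v i ≤ ∑ k, v k * v k := Finset.single_le_sum
    (fun k _ => mul_self_nonneg (v k)) (Finset.mem_univ i)
  rw [dotProduct] at h
  rw [h] at h2
  rw [abs_le]
  constructor <;> nlinarith

lemma unit_norm_le (N : ℕ) (v : Fin N → ℝ) (h : v ⬝ᵥ v = 1) : ‖v‖ ≤ 1 := by
  rw [pi_norm_le_iff_of_nonneg zero_le_one]
  intro i
  rw [Real.norm_eq_abs]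
  exact unit_abs_le N v h i

lemma pi_single_decomp (N : ℕ) (v : Fin N → ℝ) :
    v = ∑ i, v i • (Pi.single i 1 : Fin N → ℝ) := by
  funext j
  simp [Pi.single_apply, Finset.sum_apply]

lemma hess_quadform (N : ℕ) (φ : (Fin N → ℝ) → ℝ) (x : Fin N → ℝ) (v : Fin N → ℝ) :
    ((hess N φ x).mulVec v) ⬝ᵥ v
      = fderiv ℝ (fderiv ℝ φ) x v v := by
  have hij : ∀ i j, hess N φ x i j = fderiv ℝ (fderiv ℝ φ) x (Pi.single i 1) (Pi.single j 1) := by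
    intro i j
    rw [hess, iteratedFDeriv_two_apply]
    simp
  conv_rhs => rw [pi_single_decomp N v]
  rw [map_sum]
  simp only [_root_.map_smul, ContinuousLinearMap.coe_sum', ContinuousLinearMap.coe_smul',
    Finset.sum_apply, Pi.smul_apply, map_sum, _root_.map_smul, smul_eq_mul]
  simp only [mulVec, dotProduct, hij, Finset.mul_sum, Finset.sum_mul]
  rw [Finset.sum_comm]
  exact Finset.sum_congr rfl fun i _ => Finset.sum_congr rfl fun k _ => by ring

lemma taylor_unif (N : ℕ) (φ : (Fin N → ℝ) → ℝ) (x : Fin N → ℝ)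
    (hφ : ContDiffAt ℝ 2 φ x) (η : ℝ) (hη : 0 < η) :
    ∃ ε₀ > 0, ∀ ε : ℝ, 0 < ε → ε < ε₀ → ∀ v : Fin N → ℝ, v ⬝ᵥ v = 1 →
      |(1 / 2) * φ (x + ε • v) + (1 / 2) * φ (x - ε • v) - φ x -
          (ε ^ 2 / 2) * (fderiv ℝ (fderiv ℝ φ) x v v)| ≤ η * ε ^ 2 := by
  obtain ⟨u, hu, hcd⟩ := hφ.contDiffOn le_rfl (by simp)
  obtain ⟨r, hr, hball⟩ := Metric.mem_nhds_iff.1 hu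
  set B := Metric.ball x r with hB
  have hxB : x ∈ B := Metric.mem_ball_self hr
  have hcdB : ContDiffOn ℝ 2 φ B := hcd.mono hball
  set f'' : (Fin N → ℝ) → ((Fin N → ℝ) →L[ℝ] ((Fin N → ℝ) →L[ℝ] ℝ)) :=
    fun y => fderiv ℝ (fderiv ℝ φ) y with hf''
  have hdφ : ∀ y ∈ B, HasFDerivAt φ (fderiv ℝ φ y) y := fun y hy =>
    ((hcdB.differentiableOn two_ne_zero).differentiableAt
      (Metric.isOpen_ball.mem_nhds hy)).hasFDerivAt
  have hC1 : ContDiffOn ℝ 1 (fderiv ℝ φ) B :=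
    hcdB.fderiv_of_isOpen Metric.isOpen_ball (by norm_num)
  have hdf' : ∀ y ∈ B, HasFDerivAt (fderiv ℝ φ) (f'' y) y := fun y hy =>
    ((hC1.differentiableOn one_ne_zero).differentiableAt
      (Metric.isOpen_ball.mem_nhds hy)).hasFDerivAt
  have hcont : ContinuousOn f'' B :=
    hC1.continuousOn_fderiv_of_isOpen Metric.isOpen_ball le_rfl
  have hca : ContinuousAt f'' x := hcont.continuousAt (Metric.isOpen_ball.mem_nhds hxB)
  have hev : ∀ᶠ y in nhds x, ‖f'' y - f'' x‖ < η :=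
    by
      have h0 : Tendsto (fun y => ‖f'' y - f'' x‖) (nhds x) (nhds 0) := by
        exact (tendsto_iff_norm_sub_tendsto_zero (f := f'') (a := nhds x) (b := f'' x)).1 hca.tendsto
      exact h0.eventually (gt_mem_nhds hη)
  obtain ⟨δ, hδ, hδ'⟩ := Metric.eventually_nhds_iff.1 hev
  refine ⟨min δ r, lt_min hδ hr, fun ε hε hε' v hv => ?_⟩
  have hεδ : ε < δ := hε'.trans_le (min_le_left _ _)
  have hεr : ε < r := hε'.trans_le (min_le_right _ _)
  have hvn : ‖v‖ ≤ 1 := unit_norm_le N v hv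
  set c : ℝ → (Fin N → ℝ) := fun t => x + t • v with hc
  have hmem : ∀ t : ℝ, |t| < r → c t ∈ B := by
    intro t ht
    simp only [hc, B, Metric.mem_ball, dist_eq_norm, add_sub_cancel_left, norm_smul,
      Real.norm_eq_abs]
    calc |t| * ‖v‖ ≤ |t| * 1 := by gcongr
    _ < r := by rwa [mul_one]
  have hcd : ∀ t : ℝ, HasDerivAt c v t := by
    intro t
    have h1 : HasDerivAt (fun t : ℝ => t • v) ((1:ℝ) • v) t := (hasDerivAt_id t).smul_const v
    rw [one_smul] at h1
    exact h1.const_add x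
  have hg : ∀ t : ℝ, |t| < r → HasDerivAt (fun s => φ (c s)) (fderiv ℝ φ (c t) v) t := by
    intro t ht
    exact (hdφ _ (hmem t ht)).comp_hasDerivAt t (hcd t)
  have hg' : ∀ t : ℝ, |t| < r →
      HasDerivAt (fun s => fderiv ℝ φ (c s) v) (f'' (c t) v v) t := by
    intro t ht
    have h1 : HasDerivAt (fun s => fderiv ℝ φ (c s)) (f'' (c t) v) t :=
      (hdf' _ (hmem t ht)).comp_hasDerivAt t (hcd t)
    have h2 := h1.clm_apply (hasDerivAt_const t v)
    simpa using h2
  set A : ℝ := f'' x v v with hA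
  set G : ℝ → ℝ := fun t => (1/2) * φ (c t) + (1/2) * φ (c (-t)) - φ (c 0) - t^2 * (A/2)
    with hG
  have hGd : ∀ t : ℝ, |t| < r → HasDerivAt G
      ((1/2) * (fderiv ℝ φ (c t) v) - (1/2) * (fderiv ℝ φ (c (-t)) v) - t * A) t := by
    intro t ht
    have h1 := (hg t ht).const_mul (1/2 : ℝ)
    have hneg : HasDerivAt (fun s : ℝ => φ (c (-s))) (-(fderiv ℝ φ (c (-t)) v)) t := by
      have := ((hg (-t) (by rwa [abs_neg])).comp t (hasDerivAt_neg t))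
      rw [mul_neg_one] at this
      exact this
    have h2 := hneg.const_mul (1/2 : ℝ)
    have h3 : HasDerivAt (fun s : ℝ => s^2 * (A/2)) (2 * t * (A/2)) t := by
      simpa using (hasDerivAt_pow 2 t).mul_const (A/2)
    have := ((h1.add h2).sub (hasDerivAt_const t (φ (c 0)))).sub h3
    exact this.congr_deriv (by ring)
  -- first MVT
  have hεr' : ∀ t ∈ Set.Icc (0:ℝ) ε, |t| < r := fun t ht => by
    rw [abs_lt]; constructor <;> [linarith [ht.1]; linarith [ht.2]]
  obtain ⟨ξ, hξ, hξeq⟩ := exists_hasDerivAt_eq_slope G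
    (fun t => (1/2) * (fderiv ℝ φ (c t) v) - (1/2) * (fderiv ℝ φ (c (-t)) v) - t * A)
    hε (fun t ht => (hGd t (hεr' t ht)).continuousAt.continuousWithinAt)
    (fun t ht => hGd t (hεr' t (Set.mem_Icc_of_Ioo ht)))
  -- second MVT on g' over [-ξ, ξ]
  have hξε : 0 < ξ ∧ ξ < ε := hξ
  have hξr : ∀ t ∈ Set.Icc (-ξ) ξ, |t| < r := fun t ht => by
    rw [abs_lt]; constructor <;> [linarith [ht.1, hξε.1, hξε.2]; linarith [ht.2, hξε.2]]
  obtain ⟨ζ, hζ, hζeq⟩ := exists_hasDerivAt_eq_slope (fun s => fderiv ℝ φ (c s) v)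
    (fun s => f'' (c s) v v) (neg_lt_self hξε.1)
    (fun t ht => (hg' t (hξr t ht)).continuousAt.continuousWithinAt)
    (fun t ht => hg' t (hξr t (Set.mem_Icc_of_Ioo ht)))
  -- collect
  have hG0 : G 0 = 0 := by simp only [hG]; ring
  have h2ξ : ξ - -ξ = 2 * ξ := by ring
  rw [h2ξ] at hζeq
  have hsum : (fderiv ℝ φ (c ξ)) v - (fderiv ℝ φ (c (-ξ))) v
      = ((f'' (c ζ)) v) v * (2 * ξ) := by
    have h2ξ0 : (2 : ℝ) * ξ ≠ 0 := ne_of_gt (by linarith [hξε.1])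
    exact (div_eq_iff h2ξ0).1 hζeq.symm
  rw [hG0, sub_zero, sub_zero] at hξeq
  have hGε : G ε = ε * ξ * (((f'' (c ζ)) v) v - A) := by
    have h1 : G ε = ((1/2) * (fderiv ℝ φ (c ξ)) v - (1/2) * (fderiv ℝ φ (c (-ξ))) v
        - ξ * A) * ε := (div_eq_iff hε.ne').1 hξeq.symm
    have h2 : (1/2) * (fderiv ℝ φ (c ξ)) v - (1/2) * (fderiv ℝ φ (c (-ξ))) v - ξ * A
        = (1/2) * ((fderiv ℝ φ (c ξ)) v - (fderiv ℝ φ (c (-ξ))) v) - ξ * A := by ring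
    rw [h1, h2, hsum]
    ring
  -- bound
  have hζδ : dist (c ζ) x < δ := by
    have hζb : |ζ| < ε := by
      rw [abs_lt]; exact ⟨by linarith [hζ.1, hξε.2], by linarith [hζ.2, hξε.2]⟩
    simp only [hc, dist_eq_norm, add_sub_cancel_left, norm_smul, Real.norm_eq_abs]
    calc |ζ| * ‖v‖ ≤ |ζ| * 1 := by gcongr
    _ < δ := by rw [mul_one]; linarith
  have hopn : ‖f'' (c ζ) - f'' x‖ < η := hδ' hζδ
  have hquad : |((f'' (c ζ)) v) v - A| ≤ η := by
    have h1 : ((f'' (c ζ)) v) v - A = ((f'' (c ζ) - f'' x) v) v := by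
      simp [hA]
    rw [h1, ← Real.norm_eq_abs]
    have h2 : ‖((f'' (c ζ) - f'' x) v) v‖ ≤ ‖(f'' (c ζ) - f'' x) v‖ * ‖v‖ :=
      ((f'' (c ζ) - f'' x) v).le_opNorm v
    have h3 : ‖(f'' (c ζ) - f'' x) v‖ ≤ ‖f'' (c ζ) - f'' x‖ * ‖v‖ :=
      (f'' (c ζ) - f'' x).le_opNorm v
    nlinarith [norm_nonneg ((f'' (c ζ) - f'' x) v), norm_nonneg (f'' (c ζ) - f'' x),
      norm_nonneg v]
  have hGεb : |G ε| ≤ η * ε ^ 2 := by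
    rw [hGε, abs_mul, abs_mul, abs_of_pos hε, abs_of_pos hξε.1]
    have h1 : ε * ξ * |((f'' (c ζ)) v) v - A| ≤ ε * ε * η := by
      apply mul_le_mul _ hquad (abs_nonneg _) (by positivity)
      nlinarith [hξε.2]
    calc ε * ξ * |((f'' (c ζ)) v) v - A| ≤ ε * ε * η := h1
    _ = η * ε ^ 2 := by ring
  have e1 : c ε = x + ε • v := rfl
  have e2 : c (-ε) = x - ε • v := by simp [hc, sub_eq_add_neg]
  have e3 : c 0 = x := by simp [hc]
  have hfinal : (1 / 2) * φ (x + ε • v) + (1 / 2) * φ (x - ε • v) - φ x -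
      (ε ^ 2 / 2) * A = G ε := by
    simp only [hG, e1, e2, e3]
    ring
  rw [hfinal]
  exact hGεb

lemma bdd_of_abs_le {ι : Sort*} {g : ι → ℝ} {K : ℝ} (hK : ∀ i, |g i| ≤ K) :
    BddAbove (Set.range g) ∧ BddBelow (Set.range g) :=
  ⟨⟨K, by rintro _ ⟨i, rfl⟩; exact (abs_le.1 (hK i)).2⟩,
   ⟨-K, by rintro _ ⟨i, rfl⟩; exact (abs_le.1 (hK i)).1⟩⟩

lemma abs_ciSup_le {ι : Sort*} [Nonempty ι] {g : ι → ℝ} {K : ℝ} (hK : ∀ i, |g i| ≤ K) :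
    |⨆ i, g i| ≤ K := by
  rw [abs_le]
  constructor
  · exact le_trans (abs_le.1 (hK (Classical.arbitrary ι))).1
      (le_ciSup (bdd_of_abs_le hK).1 _)
  · exact ciSup_le fun i => (abs_le.1 (hK i)).2

lemma abs_ciInf_le {ι : Sort*} [Nonempty ι] {g : ι → ℝ} {K : ℝ} (hK : ∀ i, |g i| ≤ K) :
    |⨅ i, g i| ≤ K := by
  rw [abs_le]
  constructor
  · exact le_ciInf fun i => (abs_le.1 (hK i)).1
  · exact le_trans (ciInf_le (bdd_of_abs_le hK).2 _)
      (abs_le.1 (hK (Classical.arbitrary ι))).2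

lemma abs_ciSup_sub_ciSup {ι : Sort*} [Nonempty ι] {f g : ι → ℝ} {c K : ℝ}
    (hfg : ∀ i, |f i - g i| ≤ c) (hK : ∀ i, |g i| ≤ K) :
    |(⨆ i, f i) - ⨆ i, g i| ≤ c := by
  have hf : ∀ i, |f i| ≤ K + c := fun i => by
    have h1 := hfg i; have h2 := hK i
    rw [abs_le] at *
    constructor <;> [linarith [h1.1, h2.1]; linarith [h1.2, h2.2]]
  have hbf := (bdd_of_abs_le hf).1
  have hbg := (bdd_of_abs_le hK).1
  have ha : (⨆ i, g i) ≤ (⨆ i, f i) + c := ciSup_le fun i => by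
    have h1 := (abs_le.1 (hfg i)).1
    have h2 := le_ciSup hbf i
    linarith
  have hb : (⨆ i, f i) ≤ (⨆ i, g i) + c := ciSup_le fun i => by
    have h1 := (abs_le.1 (hfg i)).2
    have h2 := le_ciSup hbg i
    linarith
  rw [abs_le]
  constructor <;> linarith

lemma abs_ciInf_sub_ciInf {ι : Sort*} [Nonempty ι] {f g : ι → ℝ} {c K : ℝ}
    (hfg : ∀ i, |f i - g i| ≤ c) (hK : ∀ i, |g i| ≤ K) :
    |(⨅ i, f i) - ⨅ i, g i| ≤ c := by
  have hf : ∀ i, |f i| ≤ K + c := fun i => by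
    have h1 := hfg i; have h2 := hK i
    rw [abs_le] at *
    constructor <;> [linarith [h1.1, h2.1]; linarith [h1.2, h2.2]]
  have hbf := (bdd_of_abs_le hf).2
  have hbg := (bdd_of_abs_le hK).2
  have ha : (⨅ i, g i) - c ≤ ⨅ i, f i := le_ciInf fun i => by
    have h1 := ciInf_le hbg i
    have h2 := (abs_le.1 (hfg i)).1
    linarith
  have hb : (⨅ i, f i) - c ≤ ⨅ i, g i := le_ciInf fun i => by
    have h1 := ciInf_le hbf i
    have h2 := (abs_le.1 (hfg i)).2
    linarith
  rw [abs_le]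
  constructor <;> linarith

lemma nonempty_dim (N j : ℕ) (hjN : j ≤ N) :
    Nonempty {S : Submodule ℝ (Fin N → ℝ) // Module.finrank ℝ S = j} := by
  set b : Fin j → (Fin N → ℝ) := fun i => Pi.single (Fin.castLE hjN i) 1 with hb
  have hli : LinearIndependent ℝ b := by
    have h1 : LinearIndependent ℝ (fun i : Fin N => (Pi.single i 1 : Fin N → ℝ)) := by
      have h0 := (Pi.basisFun ℝ (Fin N)).linearIndependent
      have he : ⇑(Pi.basisFun ℝ (Fin N)) = fun i => (Pi.single i 1 : Fin N → ℝ) :=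
        funext fun i => Pi.basisFun_apply ℝ (Fin N) i
      rwa [he] at h0
    exact h1.comp (Fin.castLE hjN) (Fin.castLE_injective hjN)
  refine ⟨⟨Submodule.span ℝ (Set.range b), ?_⟩⟩
  rw [finrank_span_eq_card hli]
  simp

lemma nonempty_sphere (N j : ℕ) (hj : 1 ≤ j) (S : Submodule ℝ (Fin N → ℝ))
    (hS : Module.finrank ℝ S = j) :
    Nonempty {v : Fin N → ℝ // v ∈ S ∧ v ⬝ᵥ v = 1} := by
  obtain ⟨w, hwS, hw0⟩ := Submodule.exists_mem_ne_zero_of_ne_bot (p := S) (by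
    intro h
    rw [h, finrank_bot] at hS
    omega)
  have hww : 0 < w ⬝ᵥ w := by
    rw [dotProduct]
    have hex : ∃ i, w i ≠ 0 := by
      by_contra h
      push_neg at h
      exact hw0 (funext fun i => h i)
    obtain ⟨i, hi⟩ := hex
    exact Finset.sum_pos' (fun k _ => mul_self_nonneg (w k))
      ⟨i, Finset.mem_univ i, mul_self_pos.2 hi⟩
  set c : ℝ := (Real.sqrt (w ⬝ᵥ w))⁻¹ with hc
  refine ⟨⟨c • w, S.smul_mem c hwS, ?_⟩⟩
  rw [smul_dotProduct, dotProduct_smul, smul_eq_mul, smul_eq_mul, hc, ← mul_assoc]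
  have h2 : Real.sqrt (w ⬝ᵥ w) * Real.sqrt (w ⬝ᵥ w) = w ⬝ᵥ w := Real.mul_self_sqrt hww.le
  have h3 : (Real.sqrt (w ⬝ᵥ w))⁻¹ * (Real.sqrt (w ⬝ᵥ w))⁻¹ * (w ⬝ᵥ w)
      = (Real.sqrt (w ⬝ᵥ w) * Real.sqrt (w ⬝ᵥ w))⁻¹ * (w ⬝ᵥ w) := by ring
  rw [h3, h2]
  exact inv_mul_cancel₀ (ne_of_gt hww)

lemma quad_bound (N : ℕ) (M : Matrix (Fin N) (Fin N) ℝ) (v : Fin N → ℝ) (hv : v ⬝ᵥ v = 1) :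
    |(M.mulVec v) ⬝ᵥ v| ≤ ∑ i, ∑ k, |M i k| := by
  rw [dotProduct]
  calc |∑ i, (M.mulVec v i) * v i| ≤ ∑ i, |M.mulVec v i * v i| :=
        Finset.abs_sum_le_sum_abs _ _
  _ ≤ ∑ i, ∑ k, |M i k| := by
      apply Finset.sum_le_sum
      intro i _
      rw [abs_mul]
      have h1 : |M.mulVec v i| ≤ ∑ k, |M i k| := by
        rw [mulVec, dotProduct]
        calc |∑ k, M i k * v k| ≤ ∑ k, |M i k * v k| := Finset.abs_sum_le_sum_abs _ _
        _ ≤ ∑ k, |M i k| := by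
            apply Finset.sum_le_sum
            intro k _
            rw [abs_mul]
            calc |M i k| * |v k| ≤ |M i k| * 1 := by
                  exact mul_le_mul_of_nonneg_left (unit_abs_le N v hv k) (abs_nonneg _)
            _ = |M i k| := mul_one _
      calc |M.mulVec v i| * |v i| ≤ (∑ k, |M i k|) * 1 :=
            mul_le_mul h1 (unit_abs_le N v hv i) (abs_nonneg _)
              (Finset.sum_nonneg fun k _ => abs_nonneg _)
      _ = ∑ k, |M i k| := mul_one _

/-- Second-order Taylor expansion, uniform in unit directions:
`½φ(x+εv) + ½φ(x-εv) - φ(x) = (ε²/2)⟨D²φ(x)v,v⟩ + o(ε²)`; consequently the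
rescaled inf-sup of the two-point means converges to `λ_j(D²φ(x))` as `ε → 0⁺`. -/
theorem stmt16 (N j : ℕ) (hj : 1 ≤ j) (hjN : j ≤ N)
    (φ : (Fin N → ℝ) → ℝ) (x : Fin N → ℝ) (hφ : ContDiffAt ℝ 2 φ x) :
    (∀ η : ℝ, 0 < η → ∃ ε₀ > 0, ∀ ε : ℝ, 0 < ε → ε < ε₀ →
      ∀ v : Fin N → ℝ, v ⬝ᵥ v = 1 →
        |(1 / 2) * φ (x + ε • v) + (1 / 2) * φ (x - ε • v) - φ x -
            (ε ^ 2 / 2) * (((hess N φ x).mulVec v) ⬝ᵥ v)| ≤ η * ε ^ 2) ∧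
      Tendsto (fun ε : ℝ => (2 / ε ^ 2) *
          ((⨅ S : {S : Submodule ℝ (Fin N → ℝ) // Module.finrank ℝ S = j},
              ⨆ v : {v : Fin N → ℝ // v ∈ S.1 ∧ v ⬝ᵥ v = 1},
                ((1 / 2) * φ (x + ε • v.1) + (1 / 2) * φ (x - ε • v.1))) - φ x))
        (nhdsWithin 0 (Set.Ioi 0)) (nhds (lamInfSup N j (hess N φ x))) := by
  have part1 : ∀ η : ℝ, 0 < η → ∃ ε₀ > 0, ∀ ε : ℝ, 0 < ε → ε < ε₀ →
      ∀ v : Fin N → ℝ, v ⬝ᵥ v = 1 →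
        |(1 / 2) * φ (x + ε • v) + (1 / 2) * φ (x - ε • v) - φ x -
            (ε ^ 2 / 2) * (((hess N φ x).mulVec v) ⬝ᵥ v)| ≤ η * ε ^ 2 := by
    intro η hη
    obtain ⟨ε₀, hε₀, h⟩ := taylor_unif N φ x hφ η hη
    refine ⟨ε₀, hε₀, fun ε h1 h2 v hv => ?_⟩
    rw [hess_quadform N φ x v]
    exact h ε h1 h2 v hv
  refine ⟨part1, ?_⟩
  set M := hess N φ x with hM
  set K : ℝ := ∑ i, ∑ k, |M i k| with hK
  have hK0 : 0 ≤ K := Finset.sum_nonneg fun i _ => Finset.sum_nonneg fun k _ => abs_nonneg _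
  haveI instS : Nonempty {S : Submodule ℝ (Fin N → ℝ) // Module.finrank ℝ S = j} :=
    nonempty_dim N j hjN
  have instV : ∀ S : {S : Submodule ℝ (Fin N → ℝ) // Module.finrank ℝ S = j},
      Nonempty {v : Fin N → ℝ // v ∈ S.1 ∧ v ⬝ᵥ v = 1} :=
    fun S => nonempty_sphere N j hj S.1 S.2
  have hL : lamInfSup N j M = ⨅ S : {S : Submodule ℝ (Fin N → ℝ) // Module.finrank ℝ S = j},
      ⨆ v : {v : Fin N → ℝ // v ∈ S.1 ∧ v ⬝ᵥ v = 1}, (M.mulVec v.1) ⬝ᵥ v.1 := rfl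
  have hQb : ∀ (S : {S : Submodule ℝ (Fin N → ℝ) // Module.finrank ℝ S = j})
      (v : {v : Fin N → ℝ // v ∈ S.1 ∧ v ⬝ᵥ v = 1}), |(M.mulVec v.1) ⬝ᵥ v.1| ≤ K :=
    fun S v => quad_bound N M v.1 v.2.2
  have hBS : ∀ S : {S : Submodule ℝ (Fin N → ℝ) // Module.finrank ℝ S = j},
      |⨆ v : {v : Fin N → ℝ // v ∈ S.1 ∧ v ⬝ᵥ v = 1}, (M.mulVec v.1) ⬝ᵥ v.1| ≤ K :=
    fun S => by
      haveI := instV S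
      exact abs_ciSup_le (hQb S)
  rw [Metric.tendsto_nhdsWithin_nhds]
  intro θ hθ
  obtain ⟨ε₀, hε₀, hT⟩ := part1 (θ/5) (by linarith)
  refine ⟨ε₀, hε₀, fun {ε} hε hdist => ?_⟩
  have hεpos : 0 < ε := hε
  have hεlt : ε < ε₀ := by
    rw [Real.dist_eq, sub_zero, abs_of_pos hεpos] at hdist
    exact hdist
  have hε2 : 0 < ε ^ 2 := by positivity
  -- ψ : affine rescaling
  set ψ : ℝ → ℝ := fun t => φ x + (ε^2/2) * t with hψ
  have hψm : Monotone ψ := fun a b hab => by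
    simp only [hψ]
    have : (ε^2/2) * a ≤ (ε^2/2) * b := mul_le_mul_of_nonneg_left hab (by positivity)
    linarith
  have hψc : ∀ t : ℝ, ContinuousAt ψ t := fun t =>
    (continuous_const.add (continuous_const.mul continuous_id)).continuousAt
  -- per-subspace comparison
  have key : ∀ S : {S : Submodule ℝ (Fin N → ℝ) // Module.finrank ℝ S = j},
      |(⨆ v : {v : Fin N → ℝ // v ∈ S.1 ∧ v ⬝ᵥ v = 1},
          ((1 / 2) * φ (x + ε • v.1) + (1 / 2) * φ (x - ε • v.1)))
        - ψ (⨆ v : {v : Fin N → ℝ // v ∈ S.1 ∧ v ⬝ᵥ v = 1}, (M.mulVec v.1) ⬝ᵥ v.1)|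
        ≤ (θ/5) * ε ^ 2 := by
    intro S
    haveI := instV S
    have hsup : ψ (⨆ v : {v : Fin N → ℝ // v ∈ S.1 ∧ v ⬝ᵥ v = 1}, (M.mulVec v.1) ⬝ᵥ v.1)
        = ⨆ v : {v : Fin N → ℝ // v ∈ S.1 ∧ v ⬝ᵥ v = 1}, ψ ((M.mulVec v.1) ⬝ᵥ v.1) :=
      hψm.map_ciSup_of_continuousAt (hψc _) (bdd_of_abs_le (hQb S)).1
    rw [hsup]
    apply abs_ciSup_sub_ciSup (K := |φ x| + (ε^2/2) * K)
    · intro v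
      have h1 := hT ε hεpos hεlt v.1 v.2.2
      have h2 : (1 / 2) * φ (x + ε • v.1) + (1 / 2) * φ (x - ε • v.1)
          - ψ ((M.mulVec v.1) ⬝ᵥ v.1)
          = (1 / 2) * φ (x + ε • v.1) + (1 / 2) * φ (x - ε • v.1) - φ x
            - (ε ^ 2 / 2) * ((M.mulVec v.1) ⬝ᵥ v.1) := by
        simp only [hψ]; ring
      rw [h2]
      exact h1
    · intro v
      simp only [hψ]
      calc |φ x + ε^2/2 * ((M.mulVec v.1) ⬝ᵥ v.1)|
          ≤ |φ x| + |ε^2/2 * ((M.mulVec v.1) ⬝ᵥ v.1)| := abs_add_le _ _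
      _ ≤ |φ x| + (ε^2/2) * K := by
          rw [abs_mul, abs_of_pos (by positivity : (0:ℝ) < ε^2/2)]
          have := hQb S v
          have h3 : ε^2/2 * |(M.mulVec v.1) ⬝ᵥ v.1| ≤ ε^2/2 * K :=
            mul_le_mul_of_nonneg_left this (by positivity)
          linarith
  -- outer inf comparison
  have houter : |(⨅ S : {S : Submodule ℝ (Fin N → ℝ) // Module.finrank ℝ S = j},
      ⨆ v : {v : Fin N → ℝ // v ∈ S.1 ∧ v ⬝ᵥ v = 1},
        ((1 / 2) * φ (x + ε • v.1) + (1 / 2) * φ (x - ε • v.1)))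
      - ψ (lamInfSup N j M)| ≤ (θ/5) * ε ^ 2 := by
    have hinf : ψ (lamInfSup N j M)
        = ⨅ S : {S : Submodule ℝ (Fin N → ℝ) // Module.finrank ℝ S = j},
            ψ (⨆ v : {v : Fin N → ℝ // v ∈ S.1 ∧ v ⬝ᵥ v = 1}, (M.mulVec v.1) ⬝ᵥ v.1) := by
      rw [hL]
      exact hψm.map_ciInf_of_continuousAt (hψc _) (bdd_of_abs_le hBS).2
    rw [hinf]
    apply abs_ciInf_sub_ciInf (K := |φ x| + (ε^2/2) * K) key
    intro S
    simp only [hψ]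
    calc |φ x + ε^2/2 * (⨆ v : {v : Fin N → ℝ // v ∈ S.1 ∧ v ⬝ᵥ v = 1},
          (M.mulVec v.1) ⬝ᵥ v.1)|
        ≤ |φ x| + |ε^2/2 * (⨆ v : {v : Fin N → ℝ // v ∈ S.1 ∧ v ⬝ᵥ v = 1},
          (M.mulVec v.1) ⬝ᵥ v.1)| := abs_add_le _ _
    _ ≤ |φ x| + (ε^2/2) * K := by
        rw [abs_mul, abs_of_pos (by positivity : (0:ℝ) < ε^2/2)]
        have := hBS S
        have h3 : ε^2/2 * |⨆ v : {v : Fin N → ℝ // v ∈ S.1 ∧ v ⬝ᵥ v = 1},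
            (M.mulVec v.1) ⬝ᵥ v.1| ≤ ε^2/2 * K :=
          mul_le_mul_of_nonneg_left this (by positivity)
        linarith
  -- final arithmetic
  rw [Real.dist_eq]
  set T : ℝ := ⨅ S : {S : Submodule ℝ (Fin N → ℝ) // Module.finrank ℝ S = j},
      ⨆ v : {v : Fin N → ℝ // v ∈ S.1 ∧ v ⬝ᵥ v = 1},
        ((1 / 2) * φ (x + ε • v.1) + (1 / 2) * φ (x - ε • v.1)) with hT'
  have halg : (2 / ε ^ 2) * (T - φ x) - lamInfSup N j M
      = (2 / ε ^ 2) * (T - ψ (lamInfSup N j M)) := by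
    simp only [hψ]
    field_simp
    ring
  rw [halg, abs_mul, abs_of_pos (by positivity : (0:ℝ) < 2 / ε ^ 2)]
  calc 2 / ε ^ 2 * |T - ψ (lamInfSup N j M)| ≤ 2 / ε ^ 2 * ((θ/5) * ε ^ 2) :=
        mul_le_mul_of_nonneg_left houter (by positivity)
  _ = 2 * (θ/5) := by field_simp
  _ < θ := by linarith
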